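/- Bernstein-type identification of the discrete Laplacian in Fourier variables: if u ∈ ℓ²(ℤ) has Shannon interpolation U with Fourier transform Û supported in [−π,π], then the Shannon interpolation of Δu has Fourier transform ω ↦ (2cos ω − 2) Û(ω) = −4 sin²(ω/2) Û(ω) on (−π,π). -/

import Mathlib

noncomputable section
open MeasureTheory

lemma aux_integrable (Uhat : ℝ → ℂ) (hint : Integrable Uhat) (c : ℝ) :
    Integrable (fun ω : ℝ => Uhat ω * Complex.exp (-Complex.I * c * ω)) := by
  have h := hint.bdd_mul (f := fun ω : ℝ => Complex.exp (-Complex.I * c * ω))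
    (by apply Measurable.aestronglyMeasurable; fun_prop)
    (c := 1) (Filter.Eventually.of_forall fun ω => by simp [Complex.norm_exp])
  simpa [mul_comm] using h

/-- Identification of the discrete Laplacian in Fourier variables: let `u ∈ ℓ²(ℤ)` and let
`Û` (integrable, square integrable, supported in `[-π,π]`) be the Fourier transform of the
Shannon interpolation `U` of `u`, i.e. `U(x) = (1/2π) ∫ Û(ω) e^{-ixω} dω` and `U(g) = u_g`
for `g ∈ ℤ`.  Then the band-limited function with Fourier transform
`ω ↦ (2 cos ω - 2) Û(ω)` interpolates `Δu` on `ℤ`; that is, it is the Shannon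
interpolation of `Δu`. -/
theorem shannon_fourier_discrete_laplacian (u : ℤ → ℂ) (hu : Memℓp u 2)
    (Uhat : ℝ → ℂ) (hint : Integrable Uhat) (hL2 : MemLp Uhat 2 volume)
    (hsupp : Function.support Uhat ⊆ Set.Icc (-Real.pi) Real.pi)
    (hinterp : ∀ g : ℤ,
      u g = ((1 / (2 * Real.pi) : ℝ) : ℂ) *
        ∫ ω : ℝ, Uhat ω * Complex.exp (-Complex.I * g * ω)) :
    ∀ g : ℤ,
      ((1 / (2 * Real.pi) : ℝ) : ℂ) *
          ∫ ω : ℝ, ((2 * Real.cos ω - 2 : ℝ) : ℂ) * Uhat ω * Complex.exp (-Complex.I * g * ω)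
        = u (g + 1) - 2 * u g + u (g - 1) := by
  intro g
  have key : (fun ω : ℝ => ((2 * Real.cos ω - 2 : ℝ) : ℂ) * Uhat ω *
      Complex.exp (-Complex.I * g * ω)) =
      (fun ω : ℝ => Uhat ω * Complex.exp (-Complex.I * (((g : ℝ) + 1 : ℝ) : ℂ) * ω)
        - 2 * (Uhat ω * Complex.exp (-Complex.I * ((g : ℝ) : ℂ) * ω))
        + Uhat ω * Complex.exp (-Complex.I * (((g : ℝ) - 1 : ℝ) : ℂ) * ω)) := by
    funext ω
    have h1 : Complex.exp (-Complex.I * (((g : ℝ) + 1 : ℝ) : ℂ) * ω)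
        = Complex.exp (-Complex.I * g * ω) * Complex.exp (-((ω : ℂ) * Complex.I)) := by
      rw [← Complex.exp_add]; push_cast; ring_nf
    have h2 : Complex.exp (-Complex.I * (((g : ℝ) - 1 : ℝ) : ℂ) * ω)
        = Complex.exp (-Complex.I * g * ω) * Complex.exp ((ω : ℂ) * Complex.I) := by
      rw [← Complex.exp_add]; push_cast; ring_nf
    have hcos : ((2 * Real.cos ω - 2 : ℝ) : ℂ)
        = Complex.exp ((ω : ℂ) * Complex.I) + Complex.exp (-((ω : ℂ) * Complex.I)) - 2 := by
      push_cast [Complex.ofReal_cos]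
      rw [Complex.cos]
      ring
    rw [h1, h2, hcos]
    push_cast
    ring
  rw [key]
  have i1 := aux_integrable Uhat hint ((g : ℝ) + 1)
  have i2 := (aux_integrable Uhat hint (g : ℝ)).const_mul (2 : ℂ)
  have i3 := aux_integrable Uhat hint ((g : ℝ) - 1)
  have i12 : Integrable (fun ω : ℝ =>
      Uhat ω * Complex.exp (-Complex.I * (((g : ℝ) + 1 : ℝ) : ℂ) * ω)
        - 2 * (Uhat ω * Complex.exp (-Complex.I * ((g : ℝ) : ℂ) * ω))) volume := i1.sub i2
  rw [integral_add i12 i3, integral_sub i1 i2, integral_const_mul]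
  rw [hinterp g] at *
  have hg1 := hinterp (g + 1)
  have hg2 := hinterp (g - 1)
  push_cast at hg1 hg2 ⊢
  rw [hg1, hg2]
  ring
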